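/- arXiv:1911.03625 — 2 statements merged into one kernel-verified Lean document; each statement's English description precedes it below -/
import Mathlib

section
/- Let v₁,…,v_N : [0,T] → ℝ solve v_i'(t) = -(2/α) y(t) v_i(t), and let y solve -y' = 1/2 - (2/α) y², y(T)=0. Then the Lyapunov function L(t) = (1/N) Σᵢ v_i(t)² y(t) satisfies L(t) ≤ L(0) exp(-∫₀ᵗ (2 y(s)/α) ds) for all t ∈ [0, T]. -/
open Set

/-- Decay of the Lyapunov function `L t = (1/N) ∑ i, v i t ^ 2 * y t` for the controlled
particle system `vᵢ' = -(2/α) y vᵢ`, with `y` solving the backward Riccati equation. -/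
theorem stmt_6 (N : ℕ) (hN : 1 ≤ N) (α T : ℝ) (hα : 0 < α) (hT : 0 < T)
    (y : ℝ → ℝ)
    (hy : ∀ t ∈ Icc (0:ℝ) T, HasDerivAt y (-(1/2) + (2/α) * (y t)^2) t)
    (hyT : y T = 0)
    (v : Fin N → ℝ → ℝ)
    (hv : ∀ i, ∀ t ∈ Icc (0:ℝ) T, HasDerivAt (v i) (-(2/α) * y t * v i t) t) :
    ∀ t ∈ Icc (0:ℝ) T,
      (1/(N:ℝ)) * ∑ i, (v i t)^2 * y t ≤
        ((1/(N:ℝ)) * ∑ i, (v i 0)^2 * y 0) *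
          Real.exp (-∫ s in (0:ℝ)..t, 2 * y s / α) := by
  set f : ℝ → ℝ := fun s => 2 * y s / α with hf
  set F : ℝ → ℝ := fun u => ∫ s in (0:ℝ)..u, f s with hF
  set S : ℝ → ℝ := fun u => ∑ i, (v i u)^2 * y u with hS
  set g : ℝ → ℝ := fun u => (1/(N:ℝ) * S u) * Real.exp (F u) with hg
  have hyc : ContinuousOn y (Icc 0 T) := fun s hs => (hy s hs).continuousAt.continuousWithinAt
  have hfc : ContinuousOn f (Icc 0 T) := (continuousOn_const.mul hyc).div_const α
  have hint : ∀ t ∈ Icc (0:ℝ) T, IntervalIntegrable f MeasureTheory.volume 0 t := by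
    intro t ht
    exact (hfc.mono (by rw [uIcc_of_le ht.1]; exact Icc_subset_Icc le_rfl ht.2)).intervalIntegrable
  have hFc : ContinuousOn F (Icc 0 T) := by
    have := intervalIntegral.continuousOn_primitive_interval
      (f := f) (μ := MeasureTheory.volume) (a := 0) (b := T)
      ((hfc.mono (by rw [uIcc_of_le hT.le])).integrableOn_compact (by rw [uIcc_of_le hT.le]; exact isCompact_Icc))
    rwa [uIcc_of_le hT.le] at this
  have hvc : ∀ i, ContinuousOn (v i) (Icc 0 T) :=
    fun i s hs => (hv i s hs).continuousAt.continuousWithinAt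
  have hSc : ContinuousOn S (Icc 0 T) := by
    apply continuousOn_finset_sum
    intro i _
    exact ((hvc i).pow 2).mul hyc
  have hgc : ContinuousOn g (Icc 0 T) :=
    (continuousOn_const.mul hSc).mul (Real.continuous_exp.comp_continuousOn hFc)
  -- derivative at interior points
  have hderiv : ∀ t ∈ Ioo (0:ℝ) T, HasDerivAt g
      ((1/(N:ℝ)) * Real.exp (F t) * ∑ i, (-(1/2) * (v i t)^2)) t := by
    intro t ht
    have ht' : t ∈ Icc (0:ℝ) T := Ioo_subset_Icc_self ht
    have hfct : ContinuousAt f t :=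
      ((continuousAt_const.mul (hy t ht').continuousAt).div_const α)
    have hmeas : StronglyMeasurableAtFilter f (nhds t) MeasureTheory.volume :=
      (hfc.mono Ioo_subset_Icc_self).stronglyMeasurableAtFilter isOpen_Ioo t ht
    have hF' : HasDerivAt F (f t) t :=
      intervalIntegral.integral_hasDerivAt_right (hint t ht') hmeas hfct
    have hS' : HasDerivAt S (∑ i, ((2 * v i t ^ 1 * (-(2/α) * y t * v i t)) * y t
        + (v i t)^2 * (-(1/2) + (2/α) * (y t)^2))) t := by
      apply HasDerivAt.fun_sum
      intro i _
      exact ((hv i t ht').pow 2).mul (hy t ht')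
    have hE : HasDerivAt (fun u => Real.exp (F u)) (Real.exp (F t) * f t) t := hF'.exp
    have hall : HasDerivAt g _ t := (hS'.const_mul (1/(N:ℝ))).mul hE
    convert hall using 1
    simp only [hS, Finset.mul_sum, Finset.sum_mul, ← Finset.sum_add_distrib]
    apply Finset.sum_congr rfl
    intro i _
    simp only [hf]
    field_simp
    ring
  have hanti : AntitoneOn g (Icc 0 T) := by
    apply antitoneOn_of_deriv_nonpos (convex_Icc 0 T) hgc
    · rw [interior_Icc]
      exact fun x hx => (hderiv x hx).differentiableAt.differentiableWithinAt
    · rw [interior_Icc]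
      intro x hx
      rw [(hderiv x hx).deriv]
      apply mul_nonpos_of_nonneg_of_nonpos
      · positivity
      · apply Finset.sum_nonpos
        intro i _
        nlinarith [sq_nonneg (v i x)]
  intro t ht
  have h0 : (0:ℝ) ∈ Icc (0:ℝ) T := ⟨le_rfl, hT.le⟩
  have hgt := hanti h0 ht ht.1
  have hF0 : F 0 = 0 := intervalIntegral.integral_same
  rw [hg] at hgt
  simp only [hF0, Real.exp_zero, mul_one] at hgt
  have hexp : Real.exp (-∫ s in (0:ℝ)..t, 2 * y s / α) = (Real.exp (F t))⁻¹ := by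
    rw [Real.exp_neg]
  rw [hexp, ← div_eq_mul_inv, le_div_iff₀ (Real.exp_pos _)]
  exact hgt
end

section
/- Let ρ ≥ 0 and u be C¹ solutions of ∂_t ρ + ∂_x(ρu) = 0 and ∂_t u + u ∂_x u + (2/α) y(t) u = 0 on [0,T] × ℝ, decaying as |x| → ∞, with ∫ ρu² dx finite, and let y ≥ 0 solve the backward Riccati equation. Then 𝓛(t) := y(t) ∫ ρ(t,x) u(t,x)² dx satisfies 𝓛(t) ≤ 𝓛(0) exp(-∫₀ᵗ (2 y(s)/α) ds) for t ∈ [0,T]. -/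
open Set MeasureTheory Filter Topology NNReal

noncomputable def pdt (f : ℝ → ℝ → ℝ) (t x : ℝ) : ℝ :=
  fderiv ℝ (fun p : ℝ × ℝ => f p.1 p.2) (t, x) (1, 0)

noncomputable def pdx (f : ℝ → ℝ → ℝ) (t x : ℝ) : ℝ :=
  fderiv ℝ (fun p : ℝ × ℝ => f p.1 p.2) (t, x) (0, 1)

lemma fderiv_pair_decomp (L : ℝ × ℝ →L[ℝ] ℝ) (w : ℝ) :
    L (1, w) = L (1, 0) + w * L (0, 1) := by
  have : ((1 : ℝ), w) = ((1 : ℝ), (0 : ℝ)) + w • ((0 : ℝ), (1 : ℝ)) := by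
    simp [Prod.ext_iff]
  rw [this, map_add, L.map_smul, smul_eq_mul]

lemma hasDerivWithinAt_curve {f : ℝ → ℝ → ℝ}
    (hf : ContDiff ℝ 1 (fun p : ℝ × ℝ => f p.1 p.2))
    {ξ : ℝ → ℝ} {ξ' t : ℝ} {s : Set ℝ} (hξ : HasDerivWithinAt ξ ξ' s t) :
    HasDerivWithinAt (fun τ => f τ (ξ τ)) (pdt f t (ξ t) + ξ' * pdx f t (ξ t)) s t := by
  have hF : HasFDerivAt (fun p : ℝ × ℝ => f p.1 p.2)
      (fderiv ℝ (fun p : ℝ × ℝ => f p.1 p.2) (t, ξ t)) (t, ξ t) :=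
    (hf.differentiable one_ne_zero (t, ξ t)).hasFDerivAt
  have hc : HasDerivWithinAt (fun τ => (τ, ξ τ)) ((1 : ℝ), ξ') s t :=
    (hasDerivWithinAt_id t s).prodMk hξ
  have h2 := hF.comp_hasDerivWithinAt t hc
  have h3 : (fderiv ℝ (fun p : ℝ × ℝ => f p.1 p.2) (t, ξ t)) (1, ξ')
      = pdt f t (ξ t) + ξ' * pdx f t (ξ t) := fderiv_pair_decomp _ _
  rw [h3] at h2; exact h2

lemma hasDerivAt_curve {f : ℝ → ℝ → ℝ}
    (hf : ContDiff ℝ 1 (fun p : ℝ × ℝ => f p.1 p.2))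
    {ξ : ℝ → ℝ} {ξ' t : ℝ} (hξ : HasDerivAt ξ ξ' t) :
    HasDerivAt (fun τ => f τ (ξ τ)) (pdt f t (ξ t) + ξ' * pdx f t (ξ t)) t := by
  have hF : HasFDerivAt (fun p : ℝ × ℝ => f p.1 p.2)
      (fderiv ℝ (fun p : ℝ × ℝ => f p.1 p.2) (t, ξ t)) (t, ξ t) :=
    (hf.differentiable one_ne_zero (t, ξ t)).hasFDerivAt
  have hc : HasDerivAt (fun τ => (τ, ξ τ)) ((1 : ℝ), ξ') t :=
    (hasDerivAt_id t).prodMk hξ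
  have h2 := hF.comp_hasDerivAt t hc
  have h3 : (fderiv ℝ (fun p : ℝ × ℝ => f p.1 p.2) (t, ξ t)) (1, ξ')
      = pdt f t (ξ t) + ξ' * pdx f t (ξ t) := fderiv_pair_decomp _ _
  rw [h3] at h2; exact h2

lemma hasDerivAt_slice_t {f : ℝ → ℝ → ℝ}
    (hf : ContDiff ℝ 1 (fun p : ℝ × ℝ => f p.1 p.2)) (t x : ℝ) :
    HasDerivAt (fun s => f s x) (pdt f t x) t := by
  have := hasDerivAt_curve hf (ξ := fun _ => x) (ξ' := 0) (hasDerivAt_const t x)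
  simpa using this

lemma hasDerivAt_slice_x {f : ℝ → ℝ → ℝ}
    (hf : ContDiff ℝ 1 (fun p : ℝ × ℝ => f p.1 p.2)) (t x : ℝ) :
    HasDerivAt (fun x' => f t x') (pdx f t x) x := by
  have hF : HasFDerivAt (fun p : ℝ × ℝ => f p.1 p.2)
      (fderiv ℝ (fun p : ℝ × ℝ => f p.1 p.2) (t, x)) (t, x) :=
    (hf.differentiable one_ne_zero (t, x)).hasFDerivAt
  have hc : HasDerivAt (fun x' : ℝ => (t, x')) ((0 : ℝ), (1 : ℝ)) x :=
    (hasDerivAt_const x t).prodMk (hasDerivAt_id x)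
  have := hF.comp_hasDerivAt x hc
  simpa [pdx, Function.comp_def] using this

lemma continuous_pdt {f : ℝ → ℝ → ℝ}
    (hf : ContDiff ℝ 1 (fun p : ℝ × ℝ => f p.1 p.2)) :
    Continuous (fun q : ℝ × ℝ => pdt f q.1 q.2) := by
  have h1 : Continuous (fun q : ℝ × ℝ => fderiv ℝ (fun p : ℝ × ℝ => f p.1 p.2) q) :=
    hf.continuous_fderiv one_ne_zero
  exact h1.clm_apply continuous_const

lemma continuous_pdx {f : ℝ → ℝ → ℝ}
    (hf : ContDiff ℝ 1 (fun p : ℝ × ℝ => f p.1 p.2)) :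
    Continuous (fun q : ℝ × ℝ => pdx f q.1 q.2) := by
  have h1 : Continuous (fun q : ℝ × ℝ => fderiv ℝ (fun p : ℝ × ℝ => f p.1 p.2) q) :=
    hf.continuous_fderiv one_ne_zero
  exact h1.clm_apply continuous_const
lemma forward_invariance {g : ℝ → ℝ} {a b M₂ M : ℝ} (hab : a ≤ b) (hM : M₂ + 1 ≤ M)
    (hg : ContinuousOn g (Icc a b)) (h0 : |g a| ≤ M₂)
    (key : ∀ σ ∈ Icc a b, (∀ s ∈ Icc a σ, |g s| ≤ M) → ∀ s ∈ Icc a σ, |g s| ≤ M₂) :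
    ∀ s ∈ Icc a b, |g s| ≤ M₂ := by
  have hM2M : M₂ ≤ M := by linarith
  set S : Set ℝ := {σ ∈ Icc a b | ∀ s ∈ Icc a σ, |g s| ≤ M} with hS
  have haS : a ∈ S := by
    refine ⟨⟨le_rfl, hab⟩, fun s hs => ?_⟩
    have : s = a := le_antisymm hs.2 hs.1
    simpa [this] using h0.trans hM2M
  have hbdd : BddAbove S := ⟨b, fun σ hσ => hσ.1.2⟩
  set τ := sSup S with hτ
  have haτ : a ≤ τ := le_csSup hbdd haS
  have hτb : τ ≤ b := csSup_le ⟨a, haS⟩ fun σ hσ => hσ.1.2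
  have hlt : ∀ s ∈ Icc a b, s < τ → |g s| ≤ M := by
    intro s hs hsτ
    obtain ⟨σ, hσS, hsσ⟩ := exists_lt_of_lt_csSup ⟨a, haS⟩ hsτ
    exact hσS.2 s ⟨hs.1, hsσ.le⟩
  have hτS : τ ∈ S := by
    refine ⟨⟨haτ, hτb⟩, fun s hs => ?_⟩
    rcases lt_or_eq_of_le hs.2 with h | h
    · exact hlt s ⟨hs.1, hs.2.trans hτb⟩ h
    · subst h
      rcases eq_or_lt_of_le haτ with h' | h'
      · rw [← h']; exact h0.trans hM2M
      · -- continuity argument at τ = s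
        have hcw : ContinuousWithinAt g (Ico a τ) τ :=
          (hg τ ⟨haτ, hτb⟩).mono (fun x hx => ⟨hx.1, hx.2.le.trans hτb⟩)
        have hfe : 𝓝[Ico a τ] τ = 𝓝[Iio τ] τ := nhdsWithin_Ico_eq_nhdsLT h'
        have hcw' : Tendsto g (𝓝[Iio τ] τ) (𝓝 (g τ)) := by
          rw [← hfe]; exact hcw
        refine le_of_tendsto (hcw'.abs) ?_
        have hmem : Ico a τ ∈ 𝓝[Iio τ] τ := by
          rw [← hfe]; exact self_mem_nhdsWithin
        filter_upwards [hmem] with x hx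
        exact hlt x ⟨hx.1, hx.2.le.trans hτb⟩ hx.2
  have hτeq : τ = b := by
    by_contra hne
    have hτltb : τ < b := lt_of_le_of_ne hτb hne
    have himp := key τ hτS.1 hτS.2
    have hgτ : |g τ| < M₂ + 1 := lt_of_le_of_lt (himp τ ⟨haτ, le_rfl⟩) (by linarith)
    have hcw : ContinuousWithinAt g (Icc a b) τ := hg τ ⟨haτ, hτb⟩
    have hev : ∀ᶠ s in 𝓝[Icc a b] τ, |g s| < M₂ + 1 :=
      (hcw.abs).eventually_lt_const hgτ
    have hev' : {s : ℝ | |g s| < M₂ + 1} ∈ 𝓝[Icc a b] τ := hev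
    rw [Metric.mem_nhdsWithin_iff] at hev'
    obtain ⟨δ, hδpos, hδ⟩ := hev'
    set σ' := min b (τ + δ / 2) with hσ'
    have hτσ' : τ < σ' := lt_min hτltb (by linarith)
    have hσ'b : σ' ≤ b := min_le_left _ _
    have hσ'S : σ' ∈ S := by
      refine ⟨⟨haτ.trans hτσ'.le, hσ'b⟩, fun s hs => ?_⟩
      rcases le_or_gt s τ with h | h
      · exact hτS.2 s ⟨hs.1, h⟩
      · have hsb : s ≤ b := hs.2.trans hσ'b
        have hdist : dist s τ < δ := by
          rw [Real.dist_eq, abs_of_pos (by linarith)]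
          have : s ≤ τ + δ / 2 := hs.2.trans (min_le_right _ _)
          linarith
        have := hδ ⟨Metric.mem_ball.mpr hdist, hs.1, hsb⟩
        simp only [mem_setOf_eq] at this
        linarith
    exact absurd (le_csSup hbdd hσ'S) (not_le.mpr hτσ')
  have hallM : ∀ s ∈ Icc a b, |g s| ≤ M := by
    rw [← hτeq]; exact hτS.2
  exact key b ⟨hab, le_rfl⟩ hallM

lemma backward_invariance {g : ℝ → ℝ} {a b M₂ M : ℝ} (hab : a ≤ b) (hM : M₂ + 1 ≤ M)
    (hg : ContinuousOn g (Icc a b)) (h0 : |g b| ≤ M₂)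
    (key : ∀ σ ∈ Icc a b, (∀ s ∈ Icc σ b, |g s| ≤ M) → ∀ s ∈ Icc σ b, |g s| ≤ M₂) :
    ∀ s ∈ Icc a b, |g s| ≤ M₂ := by
  have hmap : ∀ s ∈ Icc a b, a + b - s ∈ Icc a b := by
    intro s hs; constructor <;> [linarith [hs.2]; linarith [hs.1]]
  have hres := forward_invariance (g := fun s => g (a + b - s)) hab hM
    (by
      have : ContinuousOn (fun s : ℝ => a + b - s) (Icc a b) :=
        (continuous_const.sub continuous_id).continuousOn
      exact hg.comp this hmap)
    (by simpa using h0)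
    (by
      intro σ hσ hMσ s hs
      have hkey := key (a + b - σ) (hmap σ hσ)
      have h1 : ∀ s' ∈ Icc (a + b - σ) b, |g s'| ≤ M := by
        intro s' hs'
        have : a + b - s' ∈ Icc a σ := ⟨by linarith [hs'.2], by linarith [hs'.1]⟩
        have := hMσ (a + b - s') this
        simpa [show a + b - (a + b - s') = s' by ring] using this
      have h2 := hkey h1 (a + b - s) ⟨by linarith [hs.2], by linarith [hs.1]⟩
      exact h2)
  intro s hs
  have := hres (a + b - s) (hmap s hs)
  simpa [show a + b - (a + b - s) = s by ring] using this

lemma exists_char (T : ℝ) (hT : 0 < T) (u : ℝ → ℝ → ℝ)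
    (huC1 : ContDiff ℝ 1 (fun p : ℝ × ℝ => u p.1 p.2))
    (b : ℝ → ℝ) (hb : Continuous b) (cb : ℝ) (hcb : ∀ s ∈ Icc (0:ℝ) T, |b s| ≤ cb)
    (hburg : ∀ s ∈ Icc (0:ℝ) T, ∀ x : ℝ,
      pdt u s x + u s x * pdx u s x + b s * u s x = 0)
    (t₀ : ℝ) (ht₀ : t₀ ∈ Icc (0:ℝ) T) (c : ℝ) :
    ∃ ξ : ℝ → ℝ, ξ t₀ = c ∧
      ∀ s ∈ Icc (0:ℝ) T, HasDerivWithinAt ξ (u s (ξ s)) (Icc (0:ℝ) T) s := by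
  have hcb0 : 0 ≤ cb := (abs_nonneg _).trans (hcb 0 ⟨le_rfl, hT.le⟩)
  set M₀ : ℝ := |u t₀ c| with hM₀
  have hM₀0 : 0 ≤ M₀ := abs_nonneg _
  set Mex : ℝ := Real.exp (cb * T) with hMex
  have hMex1 : 1 ≤ Mex := Real.one_le_exp (by positivity)
  set M₂ : ℝ := M₀ * Mex with hM₂
  have hM₂0 : 0 ≤ M₂ := by positivity
  set M : ℝ := M₂ + Mex with hM
  have hM₂M : M₂ + 1 ≤ M := by simp only [hM]; linarith
  set M' : ℝ := M + 1 with hM'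
  have hMM' : M ≤ M' := by linarith
  have hM'pos : 0 < M' := by simp only [hM', hM]; linarith
  set R : ℝ := M' * T + 1 with hR
  have hRpos : 0 < R := by positivity
  set v : ℝ → ℝ → ℝ := fun s x => max (-M') (min M' (u s x)) with hv
  have hvbound : ∀ s x, |v s x| ≤ M' := by
    intro s x
    rw [abs_le]
    exact ⟨le_max_left _ _, max_le (by linarith) (min_le_left _ _)⟩
  have hvu : ∀ s x, |u s x| ≤ M' → v s x = u s x := by
    intro s x h
    rw [abs_le] at h
    simp only [hv]
    rw [min_eq_right h.2, max_eq_right h.1]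
  -- Lipschitz bound on a large ball
  obtain ⟨L₀, hL₀⟩ := IsCompact.exists_bound_of_continuousOn
    (isCompact_Icc.prod (isCompact_closedBall c R))
    ((continuous_pdx huC1).continuousOn :
      ContinuousOn (fun q : ℝ × ℝ => pdx u q.1 q.2) (Icc (0:ℝ) T ×ˢ Metric.closedBall c R))
  set L : ℝ≥0 := ⟨max L₀ 0, le_max_right _ _⟩ with hL
  have hulip : ∀ s ∈ Icc (0:ℝ) T,
      LipschitzOnWith L (fun x => u s x) (Metric.closedBall c R) := by
    intro s hs
    refine Convex.lipschitzOnWith_of_nnnorm_deriv_le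
      (fun x _ => (hasDerivAt_slice_x huC1 s x).differentiableAt) ?_ (convex_closedBall c R)
    intro x hx
    rw [← NNReal.coe_le_coe, coe_nnnorm]
    have hd : deriv (fun x' => u s x') x = pdx u s x := (hasDerivAt_slice_x huC1 s x).deriv
    rw [hd]
    exact le_trans (hL₀ (s, x) ⟨hs, hx⟩) (le_max_left _ _)
  have hclamp : LipschitzWith 1 (fun w : ℝ => max (-M') (min M' w)) :=
    (LipschitzWith.id.const_min M').const_max (-M')
  have hvlip : ∀ s ∈ Icc (0:ℝ) T, LipschitzOnWith L (v s) (Metric.closedBall c R) := by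
    intro s hs
    have := hclamp.comp_lipschitzOnWith (hulip s hs)
    rw [one_mul] at this
    exact this
  have hucont : Continuous (fun p : ℝ × ℝ => u p.1 p.2) := huC1.continuous
  have hpl : IsPicardLindelof v (tmin := 0) (tmax := T) ⟨t₀, ht₀⟩ c ⟨R, hRpos.le⟩ 0
      ⟨M', hM'pos.le⟩ L :=
    { lipschitzOnWith := hvlip
      continuousOn := by
        intro x _
        have h1 : Continuous fun s : ℝ => u s x :=
          hucont.comp (continuous_id.prodMk continuous_const)
        exact (continuous_const.max (continuous_const.min h1)).continuousOn
      norm_le := by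
        intro s _ x _
        rw [Real.norm_eq_abs]
        exact hvbound s x
      mul_max_le := by
        show M' * max (T - t₀) (t₀ - 0) ≤ R - 0
        have hmax : max (T - t₀) (t₀ - 0) ≤ T := by
          apply max_le <;> [linarith [ht₀.1]; linarith [ht₀.2]]
        calc M' * max (T - t₀) (t₀ - 0) ≤ M' * T :=
              mul_le_mul_of_nonneg_left hmax hM'pos.le
          _ ≤ R := by simp only [hR]; linarith
          _ = R - 0 := (sub_zero R).symm }
  obtain ⟨ξ, hξ0, hξd⟩ := hpl.exists_eq_forall_mem_Icc_hasDerivWithinAt₀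
  set g : ℝ → ℝ := fun s => u s (ξ s) with hg
  have hξcont : ContinuousOn ξ (Icc (0:ℝ) T) := fun s hs =>
    (hξd s hs).continuousWithinAt
  have hgcont : ContinuousOn g (Icc (0:ℝ) T) := by
    have : ContinuousOn (fun s => (s, ξ s)) (Icc (0:ℝ) T) :=
      (continuous_id.continuousOn).prodMk hξcont
    exact hucont.comp_continuousOn this
  set B : ℝ → ℝ := fun s => ∫ σ in t₀..s, b σ with hB
  have hBd : ∀ s, HasDerivAt B (b s) s := fun s =>
    (hb.integral_hasStrictDerivAt t₀ s).hasDerivAt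
  have hBt₀ : B t₀ = 0 := by simp [hB]
  have hBbound : ∀ s ∈ Icc (0:ℝ) T, |B s| ≤ cb * T := by
    intro s hs
    have h1 : ∀ x ∈ uIoc t₀ s, ‖b x‖ ≤ cb := by
      intro x hx
      rw [Real.norm_eq_abs]
      apply hcb
      exact (uIoc_subset_uIcc.trans (uIcc_subset_Icc ht₀ hs)) hx
    calc |B s| = ‖∫ σ in t₀..s, b σ‖ := (Real.norm_eq_abs _).symm
      _ ≤ cb * |s - t₀| := intervalIntegral.norm_integral_le_of_norm_le_const h1
      _ ≤ cb * T := by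
          apply mul_le_mul_of_nonneg_left _ hcb0
          rw [abs_le]
          constructor <;> [linarith [hs.1, ht₀.2]; linarith [hs.2, ht₀.1]]
  have hBcont : Continuous B := continuous_iff_continuousAt.mpr fun s => (hBd s).continuousAt
  have hgd : ∀ s ∈ Icc (0:ℝ) T, |g s| ≤ M' →
      HasDerivWithinAt g (-(b s * g s)) (Icc (0:ℝ) T) s := by
    intro s hs hbound
    have h1 := hasDerivWithinAt_curve huC1 (hξd s hs)
    have h2 : v s (ξ s) = g s := hvu s (ξ s) hbound
    rw [h2] at h1
    have h3 : pdt u s (ξ s) + g s * pdx u s (ξ s) = -(b s * g s) := by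
      have h4 := hburg s hs (ξ s)
      simp only [hg]
      linarith [h4]
    rw [h3] at h1
    exact h1
  have hconst : ∀ σ₁ σ₂, σ₁ ≤ σ₂ → (0:ℝ) ≤ σ₁ → σ₂ ≤ T → t₀ ∈ Icc σ₁ σ₂ →
      (∀ s ∈ Icc σ₁ σ₂, |g s| ≤ M) → ∀ s ∈ Icc σ₁ σ₂, |g s| ≤ M₂ := by
    intro σ₁ σ₂ h12 h01 h2T ht₀m hMb
    have hsub : Icc σ₁ σ₂ ⊆ Icc (0:ℝ) T := Icc_subset_Icc h01 h2T
    set h : ℝ → ℝ := fun s => g s * Real.exp (B s) with hh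
    have hconst0 : ∀ s ∈ Icc σ₁ σ₂, h s = h σ₁ := by
      apply constant_of_has_deriv_right_zero
      · exact (hgcont.mono hsub).mul ((Real.continuous_exp.comp hBcont).continuousOn)
      · intro x hx
        have hxm : x ∈ Icc σ₁ σ₂ := ⟨hx.1, hx.2.le⟩
        have hgx := hgd x (hsub hxm) ((hMb x hxm).trans hMM')
        have hmem : Icc (0:ℝ) T ∈ 𝓝[Ici x] x :=
          mem_of_superset (Icc_mem_nhdsGE_of_mem ⟨le_rfl, hx.2⟩)
            (Icc_subset_Icc (h01.trans hx.1) h2T)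
        have hgx' := hgx.mono_of_mem_nhdsWithin hmem
        have hBx : HasDerivWithinAt (fun s => Real.exp (B s))
            (Real.exp (B x) * b x) (Ici x) x := ((hBd x).exp).hasDerivWithinAt
        have hmul := hgx'.mul hBx
        have hzero : -(b x * g x) * Real.exp (B x) + g x * (Real.exp (B x) * b x) = 0 := by
          ring
        rw [hzero] at hmul
        exact hmul
    intro s hsm
    have he := hconst0 s hsm
    have ht₀e := hconst0 t₀ ht₀m
    have hht₀ : h t₀ = u t₀ c := by simp [hh, hBt₀, hg, hξ0]
    have h1 : g s * Real.exp (B s) = u t₀ c := by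
      have : h s = h t₀ := by rw [he, ht₀e]
      rw [← hht₀]; exact this
    have hgs : g s = u t₀ c * Real.exp (-(B s)) := by
      calc g s = g s * Real.exp (B s) * Real.exp (-(B s)) := by
            rw [mul_assoc, ← Real.exp_add]; simp
        _ = u t₀ c * Real.exp (-(B s)) := by rw [h1]
    rw [hgs, abs_mul, Real.abs_exp]
    have hexp : Real.exp (-(B s)) ≤ Mex := by
      rw [hMex]
      apply Real.exp_le_exp.mpr
      have := hBbound s (hsub hsm)
      rw [abs_le] at this
      linarith [this.1]
    calc |u t₀ c| * Real.exp (-(B s)) ≤ |u t₀ c| * Mex :=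
          mul_le_mul_of_nonneg_left hexp (abs_nonneg _)
      _ = M₂ := rfl
  have h0g : |g t₀| ≤ M₂ := by
    have : g t₀ = u t₀ c := by simp [hg, hξ0]
    rw [this]
    exact le_mul_of_one_le_right hM₀0 hMex1
  have hfwd : ∀ s ∈ Icc t₀ T, |g s| ≤ M₂ := by
    apply forward_invariance ht₀.2 hM₂M (hgcont.mono (Icc_subset_Icc ht₀.1 le_rfl)) h0g
    intro σ hσ hMb
    exact hconst t₀ σ hσ.1 ht₀.1 hσ.2 ⟨le_rfl, hσ.1⟩ hMb
  have hbwd : ∀ s ∈ Icc (0:ℝ) t₀, |g s| ≤ M₂ := by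
    apply backward_invariance ht₀.1 hM₂M (hgcont.mono (Icc_subset_Icc le_rfl ht₀.2)) h0g
    intro σ hσ hMb
    exact hconst σ t₀ hσ.2 hσ.1 ht₀.2 ⟨hσ.2, le_rfl⟩ hMb
  have hgM : ∀ s ∈ Icc (0:ℝ) T, |g s| ≤ M' := by
    intro s hs
    have h1 : |g s| ≤ M₂ := by
      rcases le_total s t₀ with h | h
      · exact hbwd s ⟨hs.1, h⟩
      · exact hfwd s ⟨h, hs.2⟩
    have : M₂ ≤ M' := by simp only [hM', hM]; linarith
    linarith
  refine ⟨ξ, hξ0, fun s hs => ?_⟩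
  have h1 := hξd s hs
  have h2 : v s (ξ s) = u s (ξ s) := hvu s (ξ s) (hgM s hs)
  rw [h2] at h1
  exact h1

noncomputable def Pf (ρ u : ℝ → ℝ → ℝ) (t x : ℝ) : ℝ := ρ t x * u t x ^ 2

noncomputable def Ptf (ρ u : ℝ → ℝ → ℝ) (t x : ℝ) : ℝ :=
  pdt ρ t x * u t x ^ 2 + ρ t x * (2 * u t x * pdt u t x)

noncomputable def Pxf (ρ u : ℝ → ℝ → ℝ) (t x : ℝ) : ℝ :=
  pdx ρ t x * u t x ^ 2 + ρ t x * (2 * u t x * pdx u t x)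

section PfLemmas

variable {ρ u : ℝ → ℝ → ℝ}

lemma continuous_Pf (hρ : ContDiff ℝ 1 (fun p : ℝ × ℝ => ρ p.1 p.2))
    (hu : ContDiff ℝ 1 (fun p : ℝ × ℝ => u p.1 p.2)) : Continuous (fun q : ℝ × ℝ => Pf ρ u q.1 q.2) := by
  unfold Pf
  exact hρ.continuous.mul (hu.continuous.pow 2)

lemma continuous_Ptf (hρ : ContDiff ℝ 1 (fun p : ℝ × ℝ => ρ p.1 p.2))
    (hu : ContDiff ℝ 1 (fun p : ℝ × ℝ => u p.1 p.2)) : Continuous (fun q : ℝ × ℝ => Ptf ρ u q.1 q.2) := by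
  unfold Ptf
  exact ((continuous_pdt hρ).mul (hu.continuous.pow 2)).add
    (hρ.continuous.mul ((continuous_const.mul hu.continuous).mul (continuous_pdt hu)))

lemma continuous_Pxf (hρ : ContDiff ℝ 1 (fun p : ℝ × ℝ => ρ p.1 p.2))
    (hu : ContDiff ℝ 1 (fun p : ℝ × ℝ => u p.1 p.2)) : Continuous (fun q : ℝ × ℝ => Pxf ρ u q.1 q.2) := by
  unfold Pxf
  exact ((continuous_pdx hρ).mul (hu.continuous.pow 2)).add
    (hρ.continuous.mul ((continuous_const.mul hu.continuous).mul (continuous_pdx hu)))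

lemma hasDerivAt_Pf_x (hρ : ContDiff ℝ 1 (fun p : ℝ × ℝ => ρ p.1 p.2))
    (hu : ContDiff ℝ 1 (fun p : ℝ × ℝ => u p.1 p.2)) (t x : ℝ) :
    HasDerivAt (fun x' => Pf ρ u t x') (Pxf ρ u t x) x := by
  have h := (hasDerivAt_slice_x hρ t x).mul ((hasDerivAt_slice_x hu t x).pow 2)
  refine h.congr_deriv ?_
  unfold Pxf
  push_cast [Pi.pow_apply]
  ring

lemma hasDerivAt_Pf_curve (hρ : ContDiff ℝ 1 (fun p : ℝ × ℝ => ρ p.1 p.2))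
    (hu : ContDiff ℝ 1 (fun p : ℝ × ℝ => u p.1 p.2))
    {ξ : ℝ → ℝ} {ξ' t : ℝ} (hξ : HasDerivAt ξ ξ' t) :
    HasDerivAt (fun s => Pf ρ u s (ξ s))
      (Ptf ρ u t (ξ t) + ξ' * Pxf ρ u t (ξ t)) t := by
  have h := (hasDerivAt_curve hρ hξ).mul ((hasDerivAt_curve hu hξ).pow 2)
  refine h.congr_deriv ?_
  unfold Ptf Pxf
  push_cast [Pi.pow_apply]
  ring

lemma pde_identity {b : ℝ → ℝ} {s x : ℝ}
    (hm : pdt ρ s x + (pdx ρ s x * u s x + ρ s x * pdx u s x) = 0)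
    (hb' : pdt u s x + u s x * pdx u s x + b s * u s x = 0) :
    Ptf ρ u s x = -(pdx u s x * Pf ρ u s x + u s x * Pxf ρ u s x)
      - 2 * b s * Pf ρ u s x := by
  unfold Ptf Pxf Pf
  linear_combination (u s x)^2 * hm + (2 * ρ s x * u s x) * hb'

end PfLemmas

lemma interval_decay (T : ℝ) (hT : 0 < T) (u ρ : ℝ → ℝ → ℝ)
    (huC1 : ContDiff ℝ 1 (fun p : ℝ × ℝ => u p.1 p.2))
    (hρC1 : ContDiff ℝ 1 (fun p : ℝ × ℝ => ρ p.1 p.2))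
    (b : ℝ → ℝ) (hb : Continuous b) (cb : ℝ) (hcb : ∀ s ∈ Icc (0:ℝ) T, |b s| ≤ cb)
    (hburg : ∀ s ∈ Icc (0:ℝ) T, ∀ x : ℝ,
      pdt u s x + u s x * pdx u s x + b s * u s x = 0)
    (hmass : ∀ s ∈ Icc (0:ℝ) T, ∀ x : ℝ,
      pdt ρ s x + (pdx ρ s x * u s x + ρ s x * pdx u s x) = 0)
    (tb : ℝ) (htb : tb ∈ Icc (0:ℝ) T) (c d : ℝ) :
    ∃ a₁ a₂ : ℝ, ∫ x in c..d, Pf ρ u tb x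
      = (∫ x in a₁..a₂, Pf ρ u 0 x) * Real.exp (-(2 * ∫ σ in (0:ℝ)..tb, b σ)) := by
  obtain ⟨ξ₁, hξ₁0, hξ₁d⟩ := exists_char T hT u huC1 b hb cb hcb hburg tb htb c
  obtain ⟨ξ₂, hξ₂0, hξ₂d⟩ := exists_char T hT u huC1 b hb cb hcb hburg tb htb d
  have hξ₁c : ContinuousOn ξ₁ (Icc (0:ℝ) T) := fun s hs => (hξ₁d s hs).continuousWithinAt
  have hξ₂c : ContinuousOn ξ₂ (Icc (0:ℝ) T) := fun s hs => (hξ₂d s hs).continuousWithinAt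
  refine ⟨ξ₁ 0, ξ₂ 0, ?_⟩
  set D : ℝ → ℝ := fun s => ξ₂ s - ξ₁ s with hD
  set l : ℝ → ℝ → ℝ := fun s z => ξ₁ s + z * D s with hl
  set W : ℝ → ℝ := fun s => u s (ξ₂ s) - u s (ξ₁ s) with hW
  set ld : ℝ → ℝ → ℝ := fun s z => u s (ξ₁ s) + z * W s with hld
  set J : ℝ → ℝ := fun s => ∫ z in (0:ℝ)..1, Pf ρ u s (l s z) with hJ
  set Jd : ℝ → ℝ := fun s =>
    ∫ z in (0:ℝ)..1, (Ptf ρ u s (l s z) + ld s z * Pxf ρ u s (l s z)) with hJd'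
  set Bi : ℝ → ℝ := fun s => ∫ σ in (0:ℝ)..s, b σ with hBi
  set n : ℝ → ℝ := fun s => D s * J s * Real.exp (2 * Bi s) with hn
  have hBid : ∀ s, HasDerivAt Bi (b s) s := fun s =>
    (hb.integral_hasStrictDerivAt 0 s).hasDerivAt
  have hchar1 : ∀ s ∈ Ioo (0:ℝ) T, HasDerivAt ξ₁ (u s (ξ₁ s)) s := fun s hs =>
    (hξ₁d s (Ioo_subset_Icc_self hs)).hasDerivAt (Icc_mem_nhds hs.1 hs.2)
  have hchar2 : ∀ s ∈ Ioo (0:ℝ) T, HasDerivAt ξ₂ (u s (ξ₂ s)) s := fun s hs =>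
    (hξ₂d s (Ioo_subset_Icc_self hs)).hasDerivAt (Icc_mem_nhds hs.1 hs.2)
  -- continuity of the z-slices
  have hFz : ∀ σ, Continuous fun z => Pf ρ u σ (l σ z) := by
    intro σ
    exact (continuous_Pf hρC1 huC1).comp
      (continuous_const.prodMk
        (continuous_const.add (continuous_id.mul continuous_const)))
  have hF'z : ∀ σ, Continuous fun z =>
      Ptf ρ u σ (l σ z) + ld σ z * Pxf ρ u σ (l σ z) := by
    intro σ
    have h1 : Continuous fun z : ℝ => l σ z :=
      continuous_const.add (continuous_id.mul continuous_const)
    have h2 : Continuous fun z : ℝ => ld σ z :=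
      continuous_const.add (continuous_id.mul continuous_const)
    exact (((continuous_Ptf hρC1 huC1).comp (continuous_const.prodMk h1)).add
      (h2.mul ((continuous_Pxf hρC1 huC1).comp (continuous_const.prodMk h1))))
  -- J is continuous on [0,T]
  have hJcont : ContinuousOn J (Icc (0:ℝ) T) := by
    obtain ⟨R₁, hR₁⟩ := IsCompact.exists_bound_of_continuousOn isCompact_Icc hξ₁c
    obtain ⟨R₂, hR₂⟩ := IsCompact.exists_bound_of_continuousOn isCompact_Icc hξ₂c
    set RR : ℝ := R₁ + (R₂ + R₁) with hRR
    have hlbound : ∀ σ ∈ Icc (0:ℝ) T, ∀ z ∈ uIoc (0:ℝ) 1, |l σ z| ≤ RR := by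
      intro σ hσ z hz
      rw [uIoc_of_le (by norm_num : (0:ℝ) ≤ 1)] at hz
      have h1 : |ξ₁ σ| ≤ R₁ := by have := hR₁ σ hσ; rwa [Real.norm_eq_abs] at this
      have h2 : |ξ₂ σ| ≤ R₂ := by have := hR₂ σ hσ; rwa [Real.norm_eq_abs] at this
      have hz1 : |z| ≤ 1 := by
        rw [abs_le]; constructor <;> linarith [hz.1.le, hz.2]
      have h3 : |ξ₂ σ - ξ₁ σ| ≤ R₂ + R₁ := by
        calc |ξ₂ σ - ξ₁ σ| ≤ |ξ₂ σ| + |ξ₁ σ| := abs_sub _ _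
          _ ≤ R₂ + R₁ := add_le_add h2 h1
      calc |l σ z| ≤ |ξ₁ σ| + |z * (ξ₂ σ - ξ₁ σ)| := by
            simp only [hl, hD]; exact abs_add_le _ _
        _ = |ξ₁ σ| + |z| * |ξ₂ σ - ξ₁ σ| := by rw [abs_mul]
        _ ≤ R₁ + 1 * (R₂ + R₁) := add_le_add h1
            (mul_le_mul hz1 h3 (abs_nonneg _) zero_le_one)
        _ = RR := by ring
    obtain ⟨C₀, hC₀⟩ := (isCompact_Icc.prod (isCompact_Icc : IsCompact (Icc (-RR) RR)
        )).exists_bound_of_continuousOn (continuous_Pf hρC1 huC1).continuousOn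
    intro s hsIcc
    apply intervalIntegral.continuousWithinAt_of_dominated_interval
      (bound := fun _ => C₀)
      (Eventually.of_forall fun σ => (hFz σ).aestronglyMeasurable)
      ?_ intervalIntegrable_const ?_
    · filter_upwards [self_mem_nhdsWithin] with σ hσ
      refine ae_of_all _ fun z hz => ?_
      have hlb := hlbound σ hσ z hz
      exact hC₀ (σ, l σ z) ⟨hσ, abs_le.mp hlb⟩
    · refine ae_of_all _ fun z _ => ?_
      have h1 : ContinuousWithinAt (fun σ => l σ z) (Icc (0:ℝ) T) s := by
        simp only [hl, hD]
        exact (hξ₁c s hsIcc).add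
          (continuousWithinAt_const.mul ((hξ₂c s hsIcc).sub (hξ₁c s hsIcc)))
      exact ((continuous_Pf hρC1 huC1).continuousAt).comp_continuousWithinAt
        (continuousWithinAt_id.prodMk h1)
  -- derivative of J at interior points
  have hJderiv : ∀ s ∈ Ioo (0:ℝ) T, HasDerivAt J (Jd s) s := by
    intro s hs
    obtain ⟨hs0, hsT⟩ := hs
    set ε : ℝ := min s (T - s) / 2 with hε
    have hεpos : 0 < ε := div_pos (lt_min hs0 (by linarith)) two_pos
    have hε1 : ε ≤ s / 2 := by
      rw [hε]
      have := min_le_left s (T - s); linarith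
    have hε2 : ε ≤ (T - s) / 2 := by
      rw [hε]
      have := min_le_right s (T - s); linarith
    have hIsub : Icc (s - ε) (s + ε) ⊆ Ioo (0:ℝ) T := by
      intro x hx
      constructor
      · have := hx.1; linarith
      · have := hx.2; linarith
    have hKIcc : Icc (s - ε) (s + ε) ⊆ Icc (0:ℝ) T := hIsub.trans Ioo_subset_Icc_self
    have hKccompact : IsCompact (Icc (s - ε) (s + ε) ×ˢ Icc (0:ℝ) 1) :=
      isCompact_Icc.prod isCompact_Icc
    have hξ₁K : ContinuousOn (fun q : ℝ × ℝ => ξ₁ q.1)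
        (Icc (s - ε) (s + ε) ×ˢ Icc (0:ℝ) 1) :=
      hξ₁c.comp continuous_fst.continuousOn (fun q hq => hKIcc hq.1)
    have hξ₂K : ContinuousOn (fun q : ℝ × ℝ => ξ₂ q.1)
        (Icc (s - ε) (s + ε) ×ˢ Icc (0:ℝ) 1) :=
      hξ₂c.comp continuous_fst.continuousOn (fun q hq => hKIcc hq.1)
    have hlK : ContinuousOn (fun q : ℝ × ℝ => l q.1 q.2)
        (Icc (s - ε) (s + ε) ×ˢ Icc (0:ℝ) 1) := by
      simp only [hl, hD]
      exact hξ₁K.add (continuous_snd.continuousOn.mul (hξ₂K.sub hξ₁K))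
    have hldK : ContinuousOn (fun q : ℝ × ℝ => ld q.1 q.2)
        (Icc (s - ε) (s + ε) ×ˢ Icc (0:ℝ) 1) := by
      simp only [hld, hW]
      have hu1 : ContinuousOn (fun q : ℝ × ℝ => u q.1 (ξ₁ q.1))
          (Icc (s - ε) (s + ε) ×ˢ Icc (0:ℝ) 1) :=
        huC1.continuous.comp_continuousOn (continuous_fst.continuousOn.prodMk hξ₁K)
      have hu2 : ContinuousOn (fun q : ℝ × ℝ => u q.1 (ξ₂ q.1))
          (Icc (s - ε) (s + ε) ×ˢ Icc (0:ℝ) 1) :=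
        huC1.continuous.comp_continuousOn (continuous_fst.continuousOn.prodMk hξ₂K)
      exact hu1.add (continuous_snd.continuousOn.mul (hu2.sub hu1))
    have hGK : ContinuousOn (fun q : ℝ × ℝ =>
        Ptf ρ u q.1 (l q.1 q.2) + ld q.1 q.2 * Pxf ρ u q.1 (l q.1 q.2))
        (Icc (s - ε) (s + ε) ×ˢ Icc (0:ℝ) 1) := by
      refine (((continuous_Ptf hρC1 huC1).comp_continuousOn
        (continuous_fst.continuousOn.prodMk hlK)).add
        (hldK.mul ((continuous_Pxf hρC1 huC1).comp_continuousOn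
          (continuous_fst.continuousOn.prodMk hlK))))
    obtain ⟨C₁, hC₁⟩ := hKccompact.exists_bound_of_continuousOn hGK
    have hball : Metric.ball s ε ⊆ Icc (s - ε) (s + ε) := by
      intro σ hσ
      rw [Metric.mem_ball, Real.dist_eq, abs_lt] at hσ
      constructor <;> linarith [hσ.1, hσ.2]
    have key := intervalIntegral.hasDerivAt_integral_of_dominated_loc_of_deriv_le
      (μ := volume) (a := (0:ℝ)) (b := 1)
      (F := fun σ z => Pf ρ u σ (l σ z))
      (F' := fun σ z => Ptf ρ u σ (l σ z) + ld σ z * Pxf ρ u σ (l σ z))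
      (x₀ := s) (bound := fun _ => C₁) (s := Metric.ball s ε) (Metric.ball_mem_nhds s hεpos)
      (Eventually.of_forall fun σ => (hFz σ).aestronglyMeasurable)
      ((hFz s).intervalIntegrable 0 1)
      ((hF'z s).aestronglyMeasurable)
      (ae_of_all _ fun z hz σ hσ => by
        rw [uIoc_of_le (by norm_num : (0:ℝ) ≤ 1)] at hz
        exact hC₁ (σ, z) ⟨hball hσ, ⟨hz.1.le, hz.2⟩⟩)
      intervalIntegrable_const
      (ae_of_all _ fun z hz σ hσ => by
        have hσIoo : σ ∈ Ioo (0:ℝ) T := hIsub (hball hσ)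
        have hξ₁' := hchar1 σ hσIoo
        have hξ₂' := hchar2 σ hσIoo
        have hlz : HasDerivAt (fun σ => l σ z) (ld σ z) σ := by
          have h := hξ₁'.add ((hξ₂'.sub hξ₁').const_mul z)
          simp only [hl, hD, hld, hW]
          exact h
        exact hasDerivAt_Pf_curve hρC1 huC1 hlz)
    exact key.2
  -- the key cancellation
  have hsum : ∀ s ∈ Ioo (0:ℝ) T,
      W s * J s + D s * Jd s + 2 * b s * D s * J s = 0 := by
    intro s hs
    have hsIcc : s ∈ Icc (0:ℝ) T := Ioo_subset_Icc_self hs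
    set Φ : ℝ → ℝ := fun z => Pf ρ u s (l s z) * (ld s z - u s (l s z)) with hΦ
    set Φd : ℝ → ℝ := fun z => Pxf ρ u s (l s z) * D s * (ld s z - u s (l s z))
      + Pf ρ u s (l s z) * (W s - pdx u s (l s z) * D s) with hΦdd
    have hlz : ∀ z : ℝ, HasDerivAt (fun z => l s z) (D s) z := by
      intro z
      simpa [hl] using (hasDerivAt_mul_const (D s)).const_add (ξ₁ s)
    have hder : ∀ z ∈ uIcc (0:ℝ) 1, HasDerivAt Φ (Φd z) z := by
      intro z _
      have hPz : HasDerivAt (fun z => Pf ρ u s (l s z)) (Pxf ρ u s (l s z) * D s) z :=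
        (hasDerivAt_Pf_x hρC1 huC1 s (l s z)).comp z (hlz z)
      have huz : HasDerivAt (fun z => u s (l s z)) (pdx u s (l s z) * D s) z :=
        (hasDerivAt_slice_x huC1 s (l s z)).comp z (hlz z)
      have hldz : HasDerivAt (fun z => ld s z) (W s) z := by
        simpa [hld] using (hasDerivAt_mul_const (W s)).const_add (u s (ξ₁ s))
      exact hPz.mul (hldz.sub huz)
    have hlc : Continuous fun z : ℝ => l s z :=
      continuous_const.add (continuous_id.mul continuous_const)
    have hldc : Continuous fun z : ℝ => ld s z :=
      continuous_const.add (continuous_id.mul continuous_const)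
    have huc : Continuous fun z : ℝ => u s (l s z) :=
      huC1.continuous.comp (continuous_const.prodMk hlc)
    have hpxc : Continuous fun z : ℝ => pdx u s (l s z) :=
      (continuous_pdx huC1).comp (continuous_const.prodMk hlc)
    have hΦdc : Continuous Φd := by
      refine ((((continuous_Pxf hρC1 huC1).comp
        (continuous_const.prodMk hlc)).mul continuous_const).mul
        (hldc.sub huc)).add ?_
      exact (hFz s).mul (continuous_const.sub (hpxc.mul continuous_const))
    have hFTC := intervalIntegral.integral_eq_sub_of_hasDerivAt hder
      (hΦdc.intervalIntegrable 0 1)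
    have hl1 : l s 1 = ξ₂ s := by simp only [hl, hD]; ring
    have hl0 : l s 0 = ξ₁ s := by simp only [hl]; ring
    have hld1 : ld s 1 = u s (ξ₂ s) := by simp only [hld, hW]; ring
    have hld0 : ld s 0 = u s (ξ₁ s) := by simp only [hld]; ring
    have hint0 : ∫ z in (0:ℝ)..1, Φd z = 0 := by
      rw [hFTC]
      simp only [hΦ, hl1, hl0, hld1, hld0, sub_self, mul_zero, sub_zero]
    have hpt : ∀ z : ℝ, W s * Pf ρ u s (l s z)
        + D s * (Ptf ρ u s (l s z) + ld s z * Pxf ρ u s (l s z))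
        + 2 * b s * D s * Pf ρ u s (l s z) = Φd z := by
      intro z
      have hp := pde_identity (b := b) (hmass s hsIcc (l s z)) (hburg s hsIcc (l s z))
      simp only [hΦdd]
      linear_combination D s * hp
    have hi1 : IntervalIntegrable (fun z => Pf ρ u s (l s z)) volume 0 1 :=
      (hFz s).intervalIntegrable 0 1
    have hi2 : IntervalIntegrable
        (fun z => Ptf ρ u s (l s z) + ld s z * Pxf ρ u s (l s z)) volume 0 1 :=
      (hF'z s).intervalIntegrable 0 1
    have e1 : W s * J s = ∫ z in (0:ℝ)..1, W s * Pf ρ u s (l s z) :=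
      (intervalIntegral.integral_const_mul _ _).symm
    have e2 : D s * Jd s = ∫ z in (0:ℝ)..1,
        D s * (Ptf ρ u s (l s z) + ld s z * Pxf ρ u s (l s z)) :=
      (intervalIntegral.integral_const_mul _ _).symm
    have e3 : 2 * b s * D s * J s = ∫ z in (0:ℝ)..1,
        2 * b s * D s * Pf ρ u s (l s z) :=
      (intervalIntegral.integral_const_mul _ _).symm
    rw [e1, e2, e3, ← intervalIntegral.integral_add (hi1.const_mul _) (hi2.const_mul _),
      ← intervalIntegral.integral_add (((hi1.const_mul _)).add (hi2.const_mul _))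
        (hi1.const_mul _)]
    rw [show (fun z => W s * Pf ρ u s (l s z)
        + D s * (Ptf ρ u s (l s z) + ld s z * Pxf ρ u s (l s z))
        + 2 * b s * D s * Pf ρ u s (l s z)) = Φd from funext hpt]
    exact hint0
  -- derivative of n is zero on the interior
  have hnd : ∀ s ∈ Ioo (0:ℝ) T, HasDerivAt n 0 s := by
    intro s hs
    have hD' : HasDerivAt D (W s) s := (hchar2 s hs).sub (hchar1 s hs)
    have hE : HasDerivAt (fun s => Real.exp (2 * Bi s))
        (Real.exp (2 * Bi s) * (2 * b s)) s := ((hBid s).const_mul 2).exp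
    have h := (hD'.mul (hJderiv s hs)).mul hE
    have hzero : (W s * J s + D s * Jd s) * Real.exp (2 * Bi s)
        + D s * J s * (Real.exp (2 * Bi s) * (2 * b s)) = 0 := by
      linear_combination Real.exp (2 * Bi s) * (hsum s hs)
    rw [Pi.mul_apply, hzero] at h
    exact h
  -- continuity of n on [0,T]
  have hncont : ContinuousOn n (Icc (0:ℝ) T) := by
    have hBc : Continuous Bi := continuous_iff_continuousAt.mpr fun s => (hBid s).continuousAt
    exact ((hξ₂c.sub hξ₁c).mul hJcont).mul
      ((Real.continuous_exp.comp (continuous_const.mul hBc)).continuousOn)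
  -- n is constant
  have hne : n tb = n 0 := by
    have hdiff : DifferentiableOn ℝ n (interior (Icc (0:ℝ) T)) := by
      rw [interior_Icc]
      exact fun s hs => ((hnd s hs).differentiableAt).differentiableWithinAt
    have h0m : (0:ℝ) ∈ Icc (0:ℝ) T := ⟨le_rfl, hT.le⟩
    have hmono := monotoneOn_of_deriv_nonneg (convex_Icc (0:ℝ) T) hncont hdiff
      (fun x hx => by rw [interior_Icc] at hx; rw [(hnd x hx).deriv])
    have hanti := antitoneOn_of_deriv_nonpos (convex_Icc (0:ℝ) T) hncont hdiff
      (fun x hx => by rw [interior_Icc] at hx; rw [(hnd x hx).deriv])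
    exact le_antisymm (hanti h0m htb htb.1) (hmono h0m htb htb.1)
  -- change of variables
  have hchg : ∀ t, D t * J t = ∫ x in (ξ₁ t)..(ξ₂ t), Pf ρ u t x := by
    intro t
    have hder : ∀ z ∈ uIcc (0:ℝ) 1, HasDerivAt (fun z => ξ₁ t + z * D t) (D t) z := by
      intro z _
      simpa using (hasDerivAt_mul_const (D t)).const_add (ξ₁ t)
    have hcg : Continuous fun x => Pf ρ u t x :=
      (continuous_Pf hρC1 huC1).comp (continuous_const.prodMk continuous_id)
    have h := intervalIntegral.integral_comp_smul_deriv hder continuousOn_const hcg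
    simp only [Function.comp, smul_eq_mul] at h
    rw [intervalIntegral.integral_const_mul] at h
    have he1 : ξ₁ t + 0 * D t = ξ₁ t := by ring
    have he2 : ξ₁ t + 1 * D t = ξ₂ t := by simp only [hD]; ring
    rw [he1, he2] at h
    rw [← h]
  -- conclude
  have hBi0 : Bi 0 = 0 := by simp [hBi]
  have hexp : Real.exp (2 * Bi tb) * Real.exp (-(2 * Bi tb)) = 1 := by
    rw [← Real.exp_add]; simp
  calc ∫ x in c..d, Pf ρ u tb x
      = D tb * J tb := by rw [hchg tb, hξ₁0, hξ₂0]
    _ = n tb * Real.exp (-(2 * Bi tb)) := by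
        simp only [hn]
        rw [mul_assoc, hexp, mul_one]
    _ = n 0 * Real.exp (-(2 * Bi tb)) := by rw [hne]
    _ = (∫ x in (ξ₁ 0)..(ξ₂ 0), Pf ρ u 0 x) * Real.exp (-(2 * ∫ σ in (0:ℝ)..tb, b σ)) := by
        simp only [hn, hBi0]
        rw [hchg 0]
        norm_num
        left; rfl

lemma intervalIntegral_le_integral {f : ℝ → ℝ} (hf : Integrable f)
    (hpos : ∀ x, 0 ≤ f x) (a₁ a₂ : ℝ) : ∫ x in a₁..a₂, f x ≤ ∫ x, f x := by
  rcases le_total a₁ a₂ with h | h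
  · rw [intervalIntegral.integral_of_le h]
    exact setIntegral_le_integral hf (ae_of_all _ hpos)
  · rw [intervalIntegral.integral_of_ge h]
    have h1 : 0 ≤ ∫ x in Ioc a₂ a₁, f x :=
      setIntegral_nonneg measurableSet_Ioc (fun x _ => hpos x)
    have h2 : 0 ≤ ∫ x, f x := integral_nonneg hpos
    linarith

/-- Hydrodynamic Lyapunov decay: for `C¹` solutions `ρ ≥ 0`, `u` of the continuity
equation and the damped Burgers equation, with suitable decay and integrability, the
function `𝓛 t = y t ∫ ρ u²` satisfies `𝓛 t ≤ 𝓛 0 · exp(-∫₀ᵗ 2 y/α)` on `[0,T]`. -/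
theorem stmt_15 (α T : ℝ) (hα : 0 < α) (hT : 0 < T) (y : ℝ → ℝ)
    (hy : ∀ t ∈ Icc (0:ℝ) T, HasDerivAt y (-(1/2) + (2/α) * (y t)^2) t)
    (hyT : y T = 0) (hy0 : ∀ t ∈ Icc (0:ℝ) T, 0 ≤ y t)
    (ρ u : ℝ → ℝ → ℝ)
    (hρC1 : ContDiff ℝ 1 (fun p : ℝ × ℝ => ρ p.1 p.2))
    (huC1 : ContDiff ℝ 1 (fun p : ℝ × ℝ => u p.1 p.2))
    (hρpos : ∀ t x, 0 ≤ ρ t x)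
    (hdecay2 : ∀ t ∈ Icc (0:ℝ) T,
      Tendsto (fun x : ℝ => ρ t x * (u t x)^2) (cocompact ℝ) (nhds 0))
    (hdecay3 : ∀ t ∈ Icc (0:ℝ) T,
      Tendsto (fun x : ℝ => ρ t x * (u t x)^3) (cocompact ℝ) (nhds 0))
    (hmass : ∀ t ∈ Icc (0:ℝ) T, ∀ x : ℝ,
      deriv (fun s => ρ s x) t + deriv (fun x' => ρ t x' * u t x') x = 0)
    (hburgers : ∀ t ∈ Icc (0:ℝ) T, ∀ x : ℝ,
      deriv (fun s => u s x) t + u t x * deriv (fun x' => u t x') x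
        + (2/α) * y t * u t x = 0)
    (hint : ∀ t ∈ Icc (0:ℝ) T, Integrable (fun x : ℝ => ρ t x * (u t x)^2)) :
    ∀ t ∈ Icc (0:ℝ) T,
      y t * ∫ x : ℝ, ρ t x * (u t x)^2 ≤
        (y 0 * ∫ x : ℝ, ρ 0 x * (u 0 x)^2) *
          Real.exp (-∫ s in (0:ℝ)..t, 2 * y s / α) := by
  intro t ht
  have h0mem : (0:ℝ) ∈ Icc (0:ℝ) T := ⟨le_rfl, hT.le⟩
  -- clamp-extension of y to a globally continuous function
  set cl : ℝ → ℝ := fun s => max 0 (min T s) with hcl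
  have hclmem : ∀ s, cl s ∈ Icc (0:ℝ) T := fun s =>
    ⟨le_max_left _ _, max_le hT.le (min_le_left _ _)⟩
  have hclid : ∀ s ∈ Icc (0:ℝ) T, cl s = s := by
    intro s hs
    simp only [hcl]
    rw [min_eq_right hs.2, max_eq_right hs.1]
  set yb : ℝ → ℝ := fun s => y (cl s) with hyb
  have hybcont : Continuous yb := by
    rw [continuous_iff_continuousAt]
    intro s
    have h1 : ContinuousAt y (cl s) := (hy (cl s) (hclmem s)).continuousAt
    have h2 : ContinuousAt cl s :=
      (continuous_const.max (continuous_const.min continuous_id)).continuousAt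
    exact h1.comp h2
  have hybeq : ∀ s ∈ Icc (0:ℝ) T, yb s = y s := fun s hs => congrArg y (hclid s hs)
  set b : ℝ → ℝ := fun s => 2 / α * yb s with hbdef
  have hbcont : Continuous b := continuous_const.mul hybcont
  have hbeq : ∀ s ∈ Icc (0:ℝ) T, b s = 2 / α * y s := by
    intro s hs; simp only [hbdef]; rw [hybeq s hs]
  obtain ⟨cy, hcy⟩ := IsCompact.exists_bound_of_continuousOn isCompact_Icc
    (hybcont.continuousOn : ContinuousOn yb (Icc (0:ℝ) T))
  have hcb : ∀ s ∈ Icc (0:ℝ) T, |b s| ≤ |2 / α| * cy := by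
    intro s hs
    rw [hbdef]
    simp only
    rw [abs_mul]
    apply mul_le_mul_of_nonneg_left _ (abs_nonneg _)
    have := hcy s hs
    rwa [Real.norm_eq_abs] at this
  -- convert the PDE hypotheses
  have hburg' : ∀ s ∈ Icc (0:ℝ) T, ∀ x : ℝ,
      pdt u s x + u s x * pdx u s x + b s * u s x = 0 := by
    intro s hs x
    have h1 := hburgers s hs x
    rw [(hasDerivAt_slice_t huC1 s x).deriv, (hasDerivAt_slice_x huC1 s x).deriv] at h1
    rw [hbeq s hs]
    linarith
  have hmass' : ∀ s ∈ Icc (0:ℝ) T, ∀ x : ℝ,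
      pdt ρ s x + (pdx ρ s x * u s x + ρ s x * pdx u s x) = 0 := by
    intro s hs x
    have h1 := hmass s hs x
    rw [(hasDerivAt_slice_t hρC1 s x).deriv,
      HasDerivAt.deriv (f := fun x' => ρ s x' * u s x')
        ((hasDerivAt_slice_x hρC1 s x).mul (hasDerivAt_slice_x huC1 s x))] at h1
    linarith
  have hi0 : Integrable (fun x : ℝ => ρ 0 x * (u 0 x)^2) := hint 0 h0mem
  have hit : Integrable (fun x : ℝ => ρ t x * (u t x)^2) := hint t ht
  have hI0 : 0 ≤ ∫ x : ℝ, ρ 0 x * (u 0 x)^2 :=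
    integral_nonneg fun x => mul_nonneg (hρpos 0 x) (sq_nonneg _)
  -- the integral-decay estimate
  have hIdecay : ∫ x : ℝ, ρ t x * (u t x)^2 ≤
      (∫ x : ℝ, ρ 0 x * (u 0 x)^2) * Real.exp (-(2 * ∫ σ in (0:ℝ)..t, b σ)) := by
    have hby : ∀ k : ℕ, ∫ x in (-(k:ℝ))..(k:ℝ), ρ t x * (u t x)^2 ≤
        (∫ x : ℝ, ρ 0 x * (u 0 x)^2) * Real.exp (-(2 * ∫ σ in (0:ℝ)..t, b σ)) := by
      intro k
      obtain ⟨a₁, a₂, heq⟩ := interval_decay T hT u ρ huC1 hρC1 b hbcont _ hcb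
        hburg' hmass' t ht (-(k:ℝ)) (k:ℝ)
      have heq' : ∫ x in (-(k:ℝ))..(k:ℝ), ρ t x * (u t x)^2
          = (∫ x in a₁..a₂, ρ 0 x * (u 0 x)^2)
            * Real.exp (-(2 * ∫ σ in (0:ℝ)..t, b σ)) := heq
      rw [heq']
      apply mul_le_mul_of_nonneg_right _ (Real.exp_pos _).le
      exact intervalIntegral_le_integral hi0
        (fun x => mul_nonneg (hρpos 0 x) (sq_nonneg _)) a₁ a₂
    have htend : Tendsto (fun k : ℕ => ∫ x in (-(k:ℝ))..(k:ℝ), ρ t x * (u t x)^2)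
        atTop (𝓝 (∫ x : ℝ, ρ t x * (u t x)^2)) :=
      intervalIntegral_tendsto_integral hit
        (tendsto_neg_atTop_atBot.comp tendsto_natCast_atTop_atTop)
        tendsto_natCast_atTop_atTop
    exact le_of_tendsto htend (Eventually.of_forall hby)
  -- the ODE part
  set Bi : ℝ → ℝ := fun s => ∫ σ in (0:ℝ)..s, b σ with hBi
  have hBid : ∀ s, HasDerivAt Bi (b s) s := fun s =>
    (hbcont.integral_hasStrictDerivAt 0 s).hasDerivAt
  have hBi0 : Bi 0 = 0 := by simp [hBi]
  have hq : y t * Real.exp (-(Bi t)) ≤ y 0 := by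
    set q : ℝ → ℝ := fun s => y s * Real.exp (-(Bi s)) with hqdef
    have hqd : ∀ s ∈ Icc (0:ℝ) T,
        HasDerivAt q (-(1/2) * Real.exp (-(Bi s))) s := by
      intro s hs
      have h1 := (hy s hs).mul (((hBid s).neg).exp)
      have h2 : (-(1/2) + 2/α * (y s)^2) * Real.exp (-(Bi s))
          + y s * (Real.exp (-(Bi s)) * -(b s)) = -(1/2) * Real.exp (-(Bi s)) := by
        rw [hbeq s hs]; ring
      simp only [Pi.neg_apply] at h1
      rw [h2] at h1
      exact h1
    have hqc : ContinuousOn q (Icc (0:ℝ) T) := fun s hs =>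
      ((hqd s hs).continuousAt).continuousWithinAt
    have hqdiff : DifferentiableOn ℝ q (interior (Icc (0:ℝ) T)) := by
      rw [interior_Icc]
      exact fun s hs =>
        ((hqd s (Ioo_subset_Icc_self hs)).differentiableAt).differentiableWithinAt
    have hanti := antitoneOn_of_deriv_nonpos (convex_Icc (0:ℝ) T) hqc hqdiff
      (fun x hx => by
        rw [interior_Icc] at hx
        rw [(hqd x (Ioo_subset_Icc_self hx)).deriv]
        have := (Real.exp_pos (-(Bi x))).le
        nlinarith)
    have := hanti h0mem ht ht.1
    simpa [hqdef, hBi0] using this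
  -- final assembly
  have hA : ∫ s in (0:ℝ)..t, 2 * y s / α = Bi t := by
    apply intervalIntegral.integral_congr
    intro s hsm
    rw [uIcc_of_le ht.1] at hsm
    have hsIcc : s ∈ Icc (0:ℝ) T := ⟨hsm.1, hsm.2.trans ht.2⟩
    show 2 * y s / α = b s
    rw [hbeq s hsIcc]
    ring
  rw [hA]
  have hyt : 0 ≤ y t := hy0 t ht
  have hexp2 : Real.exp (-(2 * Bi t)) = Real.exp (-(Bi t)) * Real.exp (-(Bi t)) := by
    rw [← Real.exp_add]; ring_nf
  calc y t * ∫ x : ℝ, ρ t x * (u t x)^2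
      ≤ y t * ((∫ x : ℝ, ρ 0 x * (u 0 x)^2) * Real.exp (-(2 * Bi t))) :=
        mul_le_mul_of_nonneg_left hIdecay hyt
    _ = (y t * Real.exp (-(Bi t))) * (Real.exp (-(Bi t)) * ∫ x : ℝ, ρ 0 x * (u 0 x)^2) := by
        rw [hexp2]; ring
    _ ≤ y 0 * (Real.exp (-(Bi t)) * ∫ x : ℝ, ρ 0 x * (u 0 x)^2) :=
        mul_le_mul_of_nonneg_right hq
          (mul_nonneg (Real.exp_pos _).le hI0)
    _ = (y 0 * ∫ x : ℝ, ρ 0 x * (u 0 x)^2) * Real.exp (-(Bi t)) := by ring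
end
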